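/- For every integer k ≥ 1 the following recurrence holds in Cl ⊗ Cl: I_{2k}·I_2 = I_{2k+2} + 8k(r−k)·I_{2k} + 4k(2k−1)(r+1−k)(2r+1−2k)·I_{2k−2}. -/

import Mathlib

open scoped TensorProduct

noncomputable section

/-- The quadratic form `x₁² + ⋯ + x_{2r}²` on `ℂ^{2r}`. -/
def Qf (r : ℕ) : QuadraticForm ℂ (Fin (2*r) → ℂ) :=
  QuadraticMap.weightedSumSquares ℂ (fun _ : Fin (2*r) => (1:ℂ))

/-- The Clifford algebra of `Qf r`. -/
abbrev Cl (r : ℕ) := CliffordAlgebra (Qf r)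

/-- The generators `Γ_i`. -/
def Γgen (r : ℕ) (i : Fin (2*r)) : Cl r :=
  CliffordAlgebra.ι (Qf r) (Pi.single i 1)

/-- The antisymmetrised products `Γ_{[i₁…i_k]}`. -/
def Γbr (r k : ℕ) (i : Fin k → Fin (2*r)) : Cl r :=
  ((k.factorial : ℂ))⁻¹ •
    ∑ σ : Equiv.Perm (Fin k),
      ((Equiv.Perm.sign σ : ℤ) : ℂ) • (List.ofFn fun j => Γgen r (i (σ j))).prod

/-- The invariants `I_k ∈ Cl ⊗ Cl`. -/
def Ik (r k : ℕ) : Cl r ⊗[ℂ] Cl r :=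
  ∑ i : Fin k → Fin (2*r), (Γbr r k i) ⊗ₜ[ℂ] (Γbr r k i)

/-- The split Casimir element `Ĉ = −I₂/(16(2r−2))`. -/
def sC (r : ℕ) : Cl r ⊗[ℂ] Cl r := (-(16*(2*(r:ℂ)-2))⁻¹) • Ik r 2

/-- The top element `Γ_{2r+1} = (−i)^r Γ₁⋯Γ_{2r}`. -/
def Γtop (r : ℕ) : Cl r :=
  ((-Complex.I)^r) • (List.ofFn fun i : Fin (2*r) => Γgen r i).prod

/-- The chirality projector `p_ε = (1 + ε Γ_{2r+1})/2`. -/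
def pCh (r : ℕ) (ε : ℂ) : Cl r := (2:ℂ)⁻¹ • (1 + ε • Γtop r)

/-- The chirality projectors `p_{εε'} = p_ε ⊗ p_{ε'}`. -/
def ppCh (r : ℕ) (ε ε' : ℂ) : Cl r ⊗[ℂ] Cl r := (pCh r ε) ⊗ₜ[ℂ] (pCh r ε')

/-- The eigenvalues `c_k = (2k(2r−k) − r(2r−1))/(16(r−1))`. -/
def cEv (r k : ℕ) : ℂ :=
  (2*(k:ℂ)*(2*(r:ℂ)-(k:ℂ)) - (r:ℂ)*(2*(r:ℂ)-1)) / (16*((r:ℂ)-1))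

/-- The spectral projectors `P_k = Π_{j≠k} (Ĉ − c_j)/(c_k − c_j)`. -/
def Pk (r k : ℕ) : Cl r ⊗[ℂ] Cl r :=
  (((List.range (r+1)).filter (fun j => j ≠ k)).map
    (fun j => (cEv r k - cEv r j)⁻¹ • (sC r - cEv r j • 1))).prod

/-- `P_r^S = (p_{++} + p_{−−})·P_r`. -/
def PrS (r : ℕ) : Cl r ⊗[ℂ] Cl r := (ppCh r 1 1 + ppCh r (-1) (-1)) * Pk r r

/-- The ascending factorial `a_k(u) = (u/2)(u/2+1)⋯(u/2+k−1)`. -/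
def asc (u : ℂ) (k : ℕ) : ℂ := ∏ j ∈ Finset.range k, (u/2 + (j:ℂ))

namespace IkProof

lemma Qf_single (r : ℕ) (i : Fin (2*r)) : Qf r (Pi.single i 1) = 1 := by
  rw [Qf, QuadraticMap.weightedSumSquares_apply]
  rw [Finset.sum_eq_single i]
  · simp
  · intro b _ hb; simp [Pi.single_apply, hb]
  · simp

lemma gsq (r : ℕ) (i : Fin (2*r)) : Γgen r i * Γgen r i = 1 := by
  rw [Γgen, CliffordAlgebra.ι_sq_scalar, Qf_single, map_one]

lemma ortho (r : ℕ) {i j : Fin (2*r)} (h : i ≠ j) :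
    (Qf r).IsOrtho (Pi.single i 1) (Pi.single j 1) := by
  rw [QuadraticMap.isOrtho_def, Qf, QuadraticMap.weightedSumSquares_apply,
    QuadraticMap.weightedSumSquares_apply, QuadraticMap.weightedSumSquares_apply,
    ← Finset.sum_add_distrib]
  refine Finset.sum_congr rfl fun x _ => ?_
  simp only [Pi.add_apply, one_smul, smul_eq_mul]
  rcases eq_or_ne x i with rfl | hi
  · simp [Pi.single_apply, h.symm]
  · rcases eq_or_ne x j with rfl | hj
    · simp [Pi.single_apply, h, hi]
    · simp [Pi.single_apply, hi, hj]

lemma ganti (r : ℕ) {i j : Fin (2*r)} (h : i ≠ j) :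
    Γgen r i * Γgen r j = -(Γgen r j * Γgen r i) := by
  rw [Γgen, Γgen, CliffordAlgebra.ι_mul_ι_comm_of_isOrtho (ortho r h)]

/-- product of generators over a list of indices -/
def P (r : ℕ) (l : List (Fin (2*r))) : Cl r := (l.map (Γgen r)).prod

@[simp] lemma P_nil (r : ℕ) : P r [] = 1 := rfl

lemma P_cons (r : ℕ) (a : Fin (2*r)) (l : List (Fin (2*r))) :
    P r (a :: l) = Γgen r a * P r l := by simp [P]

lemma P_append (r : ℕ) (l l' : List (Fin (2*r))) :
    P r (l ++ l') = P r l * P r l' := by simp [P]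

lemma P_singleton (r : ℕ) (a : Fin (2*r)) : P r [a] = Γgen r a := by simp [P]

/-- moving a generator through a list not containing it -/
lemma P_move (r : ℕ) (a : Fin (2*r)) :
    ∀ (l : List (Fin (2*r))), (∀ x ∈ l, x ≠ a) →
      Γgen r a * P r l = ((-1:ℂ)^l.length) • (P r l * Γgen r a)
  | [], _ => by simp
  | x :: l, h => by
    have hx : x ≠ a := h x (by simp)
    have ih := P_move r a l (fun y hy => h y (by simp [hy]))
    rw [P_cons, ← mul_assoc, ganti r (show a ≠ x from Ne.symm hx), neg_mul,
      mul_assoc, ih, mul_smul_comm, ← neg_smul]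
    simp [pow_succ, mul_assoc, P_cons]

/-- cofactor expansion -/
lemma P_cofactor (r : ℕ) : ∀ (m : ℕ) (g : Fin (m+1) → Fin (2*r)),
    Function.Injective g → ∀ (p : Fin (m+1)),
      Γgen r (g p) * P r (List.ofFn (g ∘ p.succAbove))
        = ((-1:ℂ)^(p:ℕ)) • P r (List.ofFn g) := by
  intro m
  induction m with
  | zero =>
    intro g hg p
    have : p = 0 := Fin.fin_one_eq_zero p
    subst this
    simp [Fin.succAbove_zero, List.ofFn_succ, P_cons, Function.comp]
  | succ m ih =>
    intro g hg p
    have headfact : Γgen r (g 0) * P r (List.ofFn (g ∘ Fin.succ))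
        = P r (List.ofFn g) := by
      rw [← P_cons]
      exact congrArg (P r) (List.ofFn_succ : List.ofFn g = _).symm
    rcases Fin.eq_zero_or_eq_succ p with rfl | ⟨q, rfl⟩
    · simpa [Fin.succAbove_zero] using headfact
    · have hlist : List.ofFn (g ∘ (q.succ).succAbove)
          = g 0 :: List.ofFn ((g ∘ Fin.succ) ∘ q.succAbove) := by
        rw [List.ofFn_succ]
        congr 1
        · have : (fun i : Fin m => (g ∘ q.succ.succAbove) i.succ)
              = (g ∘ Fin.succ) ∘ q.succAbove := by
            funext j; simp [Function.comp, Fin.succ_succAbove_succ]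
          rw [this]
      rw [hlist, P_cons, ← mul_assoc, ganti r (hg.ne (Fin.succ_ne_zero q)),
        neg_mul, mul_assoc]
      have ihq := ih (g ∘ Fin.succ) (hg.comp (Fin.succ_injective _)) q
      have hgq : Γgen r (g q.succ) = Γgen r ((g ∘ Fin.succ) q) := rfl
      rw [hgq, ihq, mul_smul_comm, ← neg_smul, headfact,
        show ((q.succ : Fin (m+2)) : ℕ) = (q:ℕ)+1 from rfl, pow_succ,
        show ((-1:ℂ)^(q:ℕ) * -1) = -((-1:ℂ)^(q:ℕ)) from by ring]

/-- swap changes the sign -/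
lemma P_swap (r : ℕ) : ∀ (m : ℕ) (g : Fin m → Fin (2*r)),
    Function.Injective g → ∀ (x y : Fin m), x ≠ y →
      P r (List.ofFn (g ∘ (Equiv.swap x y))) = - P r (List.ofFn g) := by
  intro m
  induction m with
  | zero => intro g hg x y hxy; exact x.elim0
  | succ m ih =>
    intro g hg x y hxy
    cases m with
    | zero =>
      exact absurd ((Fin.fin_one_eq_zero x).trans (Fin.fin_one_eq_zero y).symm) hxy
    | succ m =>
    have key : ∀ (g : Fin (m+2) → Fin (2*r)), Function.Injective g →
        ∀ y : Fin (m+2), y ≠ 0 →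
        P r (List.ofFn (g ∘ (Equiv.swap 0 y))) = - P r (List.ofFn g) := by
      intro g hg y hy
      set g' : Fin (m+2) → Fin (2*r) := g ∘ (Equiv.swap 0 y) with hg'def
      have hg' : Function.Injective g' := hg.comp (Equiv.injective _)
      have hy0 : y.succAbove (0 : Fin (m+1)) = 0 := by
        obtain ⟨q, rfl⟩ : ∃ q : Fin (m+1), y = q.succ := by
          rcases Fin.eq_zero_or_eq_succ y with rfl | h
          · exact absurd rfl hy
          · exact h
        exact Fin.succ_succAbove_zero q
      have hA : ∀ j : Fin m, g' (y.succAbove j.succ) = g (y.succAbove j.succ) := by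
        intro j
        have h1 : y.succAbove j.succ ≠ y := Fin.succAbove_ne y _
        have h2 : y.succAbove j.succ ≠ 0 := by
          intro h
          have := Fin.succAbove_right_injective (p := y) (h.trans hy0.symm)
          exact (Fin.succ_ne_zero j) this
        simp only [hg'def, Function.comp_apply]
        rw [Equiv.swap_apply_of_ne_of_ne h2 h1]
      have c1 := P_cofactor r (m+1) g hg y
      have c2 := P_cofactor r (m+1) g' hg' y
      have e1 : List.ofFn (g ∘ y.succAbove)
          = g 0 :: List.ofFn (fun j : Fin m => g (y.succAbove j.succ)) := by
        rw [List.ofFn_succ]; congr 1; simp [Function.comp, hy0]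
      have e2 : List.ofFn (g' ∘ y.succAbove)
          = g y :: List.ofFn (fun j : Fin m => g (y.succAbove j.succ)) := by
        rw [List.ofFn_succ]
        have h1 : (g' ∘ y.succAbove) 0 = g y := by
          simp only [Function.comp_apply]
          rw [hy0]
          simp only [hg'def, Function.comp_apply]
          rw [Equiv.swap_apply_left]
        have h2 : (fun i : Fin m => (g' ∘ y.succAbove) i.succ)
            = fun j : Fin m => g (y.succAbove j.succ) := funext fun j => hA j
        rw [h1, h2]
      have hgy' : Γgen r (g' y) = Γgen r (g 0) := by
        simp only [hg'def, Function.comp_apply]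
        rw [Equiv.swap_apply_right]
      set A := P r (List.ofFn (fun j : Fin m => g (y.succAbove j.succ))) with hA'
      rw [e1, P_cons] at c1
      rw [e2, P_cons, hgy'] at c2
      have hne : g 0 ≠ g y := hg.ne (Ne.symm hy)
      have swap2 : Γgen r (g 0) * (Γgen r (g y) * A)
          = - (Γgen r (g y) * (Γgen r (g 0) * A)) := by
        rw [← mul_assoc, ganti r hne, neg_mul, mul_assoc]
      rw [swap2, c1, ← smul_neg] at c2
      have hpow : ((-1:ℂ)^((y : Fin (m+2)):ℕ)) ≠ 0 := by
        apply pow_ne_zero; norm_num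
      exact (smul_right_injective (Cl r) hpow c2).symm
    rcases Fin.eq_zero_or_eq_succ x with rfl | ⟨p, rfl⟩
    · exact key g hg y (Ne.symm hxy)
    · rcases Fin.eq_zero_or_eq_succ y with rfl | ⟨q, rfl⟩
      · rw [Equiv.swap_comm]
        exact key g hg p.succ hxy
      · have hpq : p ≠ q := fun h => hxy (by rw [h])
        have hswap : ∀ j : Fin (m+1),
            Equiv.swap p.succ q.succ j.succ = (Equiv.swap p q j).succ := by
          intro j
          rcases eq_or_ne j p with rfl | hjp
          · simp [Equiv.swap_apply_left]
          · rcases eq_or_ne j q with rfl | hjq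
            · simp [Equiv.swap_apply_right]
            · rw [Equiv.swap_apply_of_ne_of_ne
                (by simpa [Fin.succ_inj] using hjp)
                (by simpa [Fin.succ_inj] using hjq),
                Equiv.swap_apply_of_ne_of_ne hjp hjq]
        have e : List.ofFn (g ∘ Equiv.swap p.succ q.succ)
            = g 0 :: List.ofFn ((g ∘ Fin.succ) ∘ Equiv.swap p q) := by
          rw [List.ofFn_succ]
          have h1 : (g ∘ Equiv.swap p.succ q.succ) 0 = g 0 := by
            simp only [Function.comp_apply]
            rw [Equiv.swap_apply_of_ne_of_ne
              (Ne.symm (Fin.succ_ne_zero p)) (Ne.symm (Fin.succ_ne_zero q))]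
          have h2 : (fun i : Fin (m+1) => (g ∘ Equiv.swap p.succ q.succ) i.succ)
              = (g ∘ Fin.succ) ∘ Equiv.swap p q := by
            funext j
            simp only [Function.comp_apply, hswap j]
          rw [h1, h2]
        have headfact : Γgen r (g 0) * P r (List.ofFn (g ∘ Fin.succ))
            = P r (List.ofFn g) := by
          rw [← P_cons]
          exact congrArg (P r) (List.ofFn_succ : List.ofFn g = _).symm
        rw [e, P_cons, ih (g ∘ Fin.succ) (hg.comp (Fin.succ_injective _)) p q hpq,
          mul_neg, headfact]

/-- permutation changes by sign -/
lemma P_perm (r : ℕ) (m : ℕ) (g : Fin m → Fin (2*r)) (hg : Function.Injective g)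
    (σ : Equiv.Perm (Fin m)) :
    P r (List.ofFn (g ∘ σ)) = ((Equiv.Perm.sign σ : ℤ) : ℂ) • P r (List.ofFn g) := by
  refine Equiv.Perm.swap_induction_on' σ ?_ ?_
  · simp
  · intro f x y hxy ihf
    have hcomp : g ∘ ⇑(f * Equiv.swap x y) = (g ∘ ⇑f) ∘ ⇑(Equiv.swap x y) := by
      rw [Equiv.Perm.coe_mul]
      rfl
    rw [hcomp, P_swap r m (g ∘ f) (hg.comp f.injective) x y hxy, ihf]
    simp [Equiv.Perm.sign_mul, Equiv.Perm.sign_swap hxy, neg_smul]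

/-- basis monomial attached to a finset -/
def Gl (r : ℕ) (S : Finset (Fin (2*r))) : Cl r := P r (S.sort (· ≤ ·))

lemma sign_sq (m : ℕ) (σ : Equiv.Perm (Fin m)) :
    ((Equiv.Perm.sign σ : ℤ) : ℂ) * ((Equiv.Perm.sign σ : ℤ) : ℂ) = 1 := by
  rcases Int.units_eq_one_or (Equiv.Perm.sign σ) with h | h <;> rw [h] <;> norm_num

lemma Γbr_of_injective (r m : ℕ) (g : Fin m → Fin (2*r)) (hg : Function.Injective g) :
    Γbr r m g = P r (List.ofFn g) := by
  unfold Γbr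
  have hterm : ∀ σ : Equiv.Perm (Fin m),
      ((Equiv.Perm.sign σ : ℤ) : ℂ) • (List.ofFn fun j => Γgen r (g (σ j))).prod
        = P r (List.ofFn g) := by
    intro σ
    have h1 : (List.ofFn fun j => Γgen r (g (σ j))).prod = P r (List.ofFn (g ∘ σ)) := by
      rw [P, List.map_ofFn]
      rfl
    rw [h1, P_perm r m g hg σ, smul_smul, sign_sq, one_smul]
  rw [Finset.sum_congr rfl (fun σ _ => hterm σ), Finset.sum_const, Finset.card_univ,
    Fintype.card_perm, Fintype.card_fin, ← Nat.cast_smul_eq_nsmul ℂ, smul_smul,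
    inv_mul_cancel₀ (by exact_mod_cast Nat.factorial_ne_zero m), one_smul]

lemma Γbr_of_not_injective (r m : ℕ) (g : Fin m → Fin (2*r))
    (hg : ¬ Function.Injective g) : Γbr r m g = 0 := by
  unfold Function.Injective at hg
  push_neg at hg
  obtain ⟨a, b, hab, hne⟩ := hg
  set F : Equiv.Perm (Fin m) → Cl r := fun σ =>
    ((Equiv.Perm.sign σ : ℤ) : ℂ) • (List.ofFn fun j => Γgen r (g (σ j))).prod with hF
  have hg2 : ∀ x, g (Equiv.swap a b x) = g x := by
    intro x
    rcases eq_or_ne x a with rfl | hxa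
    · rw [Equiv.swap_apply_left]; exact hab.symm
    · rcases eq_or_ne x b with rfl | hxb
      · rw [Equiv.swap_apply_right]; exact hab
      · rw [Equiv.swap_apply_of_ne_of_ne hxa hxb]
  have key : ∀ σ, F (Equiv.swap a b * σ) = - F σ := by
    intro σ
    have hprod : (List.ofFn fun j => Γgen r (g ((Equiv.swap a b * σ) j)))
        = (List.ofFn fun j => Γgen r (g (σ j))) := by
      refine congrArg List.ofFn (funext fun j => ?_)
      rw [Equiv.Perm.mul_apply, hg2]
    rw [hF]
    simp only [hprod, Equiv.Perm.sign_mul, Equiv.Perm.sign_swap hne]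
    push_cast
    rw [neg_one_mul, neg_smul]
  have hS : (∑ σ : Equiv.Perm (Fin m), F σ) = 0 := by
    have h1 : (∑ σ : Equiv.Perm (Fin m), F σ)
        = ∑ σ : Equiv.Perm (Fin m), F (Equiv.swap a b * σ) :=
      (Equiv.sum_comp (Equiv.mulLeft (Equiv.swap a b)) F).symm
    rw [Finset.sum_congr rfl (fun σ _ => key σ), Finset.sum_neg_distrib] at h1
    have h2 : (2:ℂ) • (∑ σ : Equiv.Perm (Fin m), F σ) = 0 := by
      rw [two_smul]
      nth_rewrite 1 [h1]
      rw [neg_add_cancel]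
    have := congrArg (fun x => (2:ℂ)⁻¹ • x) h2
    simpa [smul_smul] using this
  rw [Γbr, hS, smul_zero]

lemma P_eq_Gl (r : ℕ) (t : List (Fin (2*r))) (ht : t.Nodup) :
    ∃ ε : ℂ, ε^2 = 1 ∧ P r t = ε • Gl r t.toFinset := by
  classical
  set S := t.toFinset with hSdef
  set l := S.sort (· ≤ ·) with hldef
  have hcard : S.card = t.length := List.toFinset_card_of_nodup ht
  have hlen : l.length = t.length := by rw [hldef, Finset.length_sort, hcard]
  set m := t.length with hmdef
  have hoft : List.ofFn t.get = t := List.ofFn_get t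
  set e : Fin m → Fin (2*r) := fun j => l.get (Fin.cast hlen.symm j) with hedef
  have hofe : List.ofFn e = l := by
    apply List.ext_getElem
    · simp [hlen]
    · intro i h1 h2
      simp [hedef, List.getElem_ofFn, List.get_eq_getElem]
  have hlnd : l.Nodup := S.sort_nodup _
  have hti : Function.Injective t.get := List.nodup_iff_injective_get.mp ht
  have hei : Function.Injective e :=
    (List.nodup_iff_injective_get.mp hlnd).comp (Fin.cast_injective _)
  have hmemt : ∀ j : Fin m, t.get j ∈ S := fun j =>
    List.mem_toFinset.mpr (List.get_mem t _)
  have hmeme : ∀ j : Fin m, e j ∈ S := fun j =>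
    (Finset.mem_sort _).mp (List.get_mem l _)
  have hcardS : Fintype.card {x // x ∈ S} = m := by
    rw [Fintype.card_coe, hcard]
  set t' : Fin m → {x // x ∈ S} := fun j => ⟨t.get j, hmemt j⟩ with ht'def
  set e' : Fin m → {x // x ∈ S} := fun j => ⟨e j, hmeme j⟩ with he'def
  have ht'i : Function.Injective t' := fun a b h => hti (congrArg Subtype.val h)
  have he'i : Function.Injective e' := fun a b h => hei (congrArg Subtype.val h)
  have ht'b : Function.Bijective t' :=
    (Fintype.bijective_iff_injective_and_card t').mpr ⟨ht'i, by rw [hcardS, Fintype.card_fin]⟩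
  have he'b : Function.Bijective e' :=
    (Fintype.bijective_iff_injective_and_card e').mpr ⟨he'i, by rw [hcardS, Fintype.card_fin]⟩
  set σ : Equiv.Perm (Fin m) :=
    (Equiv.ofBijective t' ht'b).trans (Equiv.ofBijective e' he'b).symm with hσdef
  have hcompose : e ∘ σ = t.get := by
    funext j
    have h1 : e' (σ j) = t' j := by
      rw [hσdef]
      exact (Equiv.ofBijective e' he'b).apply_symm_apply (t' j)
    exact congrArg Subtype.val h1
  refine ⟨((Equiv.Perm.sign σ : ℤ) : ℂ), ?_, ?_⟩
  · rw [sq, sign_sq]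
  · calc P r t = P r (List.ofFn (e ∘ σ)) := by rw [hcompose, hoft]
    _ = ((Equiv.Perm.sign σ : ℤ) : ℂ) • P r (List.ofFn e) := P_perm r m e hei σ
    _ = ((Equiv.Perm.sign σ : ℤ) : ℂ) • Gl r S := by rw [hofe]; rfl

def WW (r : ℕ) (S : Finset (Fin (2*r))) : Cl r ⊗[ℂ] Cl r := Gl r S ⊗ₜ[ℂ] Gl r S

lemma tmul_sq_eq (r : ℕ) {x y : Cl r} (ε : ℂ) (hε : ε^2 = 1) (h : x = ε • y) :
    x ⊗ₜ[ℂ] x = y ⊗ₜ[ℂ] y := by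
  rw [h]
  simp only [TensorProduct.smul_tmul', TensorProduct.tmul_smul, smul_smul, ← sq, hε, one_smul]

lemma fibercard (r m : ℕ) (S : Finset (Fin (2*r))) (hS : S.card = m) :
    (Finset.univ.filter (fun i : Fin m → Fin (2*r) =>
      Function.Injective i ∧ (List.ofFn i).toFinset = S)).card = m.factorial := by
  classical
  have hstep : (Finset.univ.filter (fun i : Fin m → Fin (2*r) =>
      Function.Injective i ∧ (List.ofFn i).toFinset = S)).card
      = Fintype.card {i : Fin m → Fin (2*r) //
          Function.Injective i ∧ (List.ofFn i).toFinset = S} :=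
    (Fintype.card_subtype _).symm
  rw [hstep]
  have hmem : ∀ (p : {i : Fin m → Fin (2*r) //
      Function.Injective i ∧ (List.ofFn i).toFinset = S}) (j : Fin m), p.1 j ∈ S := by
    intro p j
    have hj : p.1 j ∈ (List.ofFn p.1).toFinset :=
      List.mem_toFinset.mpr (List.mem_ofFn.mpr ⟨j, rfl⟩)
    rwa [p.2.2] at hj
  have hcardS : Fintype.card {x // x ∈ S} = m := by rw [Fintype.card_coe, hS]
  have E : {i : Fin m → Fin (2*r) //
      Function.Injective i ∧ (List.ofFn i).toFinset = S} ≃ (Fin m ≃ {x // x ∈ S}) :=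
    { toFun := fun p => Equiv.ofBijective (fun j => (⟨p.1 j, hmem p j⟩ : {x // x ∈ S}))
        ((Fintype.bijective_iff_injective_and_card _).mpr
          ⟨fun a b h => p.2.1 (congrArg Subtype.val h), by rw [hcardS, Fintype.card_fin]⟩)
      invFun := fun e => ⟨fun j => (e j : Fin (2*r)), by
        constructor
        · exact fun a b h => e.injective (Subtype.coe_injective h)
        · ext x
          simp only [List.mem_toFinset, List.mem_ofFn]
          constructor
          · rintro ⟨j, rfl⟩
            exact (e j).2
          · intro hx
            exact ⟨e.symm ⟨x, hx⟩, congrArg Subtype.val (e.apply_symm_apply ⟨x, hx⟩)⟩⟩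
      left_inv := fun p => Subtype.ext (funext fun j => rfl)
      right_inv := fun e => Equiv.ext fun j => Subtype.ext rfl }
  rw [Fintype.card_congr E,
    Fintype.card_equiv (Fintype.equivOfCardEq (by rw [hcardS, Fintype.card_fin])),
    Fintype.card_fin]

/-- Claim A : `I_m` as a sum over subsets of size `m`. -/
lemma IkA (r m : ℕ) :
    Ik r m = ((m.factorial : ℂ)) •
      ∑ S ∈ Finset.powersetCard m (Finset.univ : Finset (Fin (2*r))), WW r S := by
  classical
  rw [Ik]
  rw [← Finset.sum_filter_add_sum_filter_not Finset.univ
    (fun i : Fin m → Fin (2*r) => Function.Injective i)]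
  have h2 : (∑ i ∈ Finset.univ.filter
      (fun i : Fin m → Fin (2*r) => ¬ Function.Injective i),
      (Γbr r m i) ⊗ₜ[ℂ] (Γbr r m i)) = 0 := by
    refine Finset.sum_eq_zero fun i hi => ?_
    rw [Γbr_of_not_injective r m i (Finset.mem_filter.mp hi).2]
    exact TensorProduct.zero_tmul _ _
  rw [h2, add_zero]
  have hmaps : ∀ i ∈ Finset.univ.filter
      (fun i : Fin m → Fin (2*r) => Function.Injective i),
      (List.ofFn i).toFinset ∈ Finset.powersetCard m (Finset.univ : Finset (Fin (2*r))) := by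
    intro i hi
    rw [Finset.mem_powersetCard]
    refine ⟨Finset.subset_univ _, ?_⟩
    rw [List.toFinset_card_of_nodup (List.nodup_ofFn.mpr (Finset.mem_filter.mp hi).2),
      List.length_ofFn]
  rw [← Finset.sum_fiberwise_of_maps_to hmaps, Finset.smul_sum]
  refine Finset.sum_congr rfl fun S hS => ?_
  have hScard : S.card = m := (Finset.mem_powersetCard.mp hS).2
  have hterm : ∀ i ∈ (Finset.univ.filter
      (fun i : Fin m → Fin (2*r) => Function.Injective i)).filter
        (fun i => (List.ofFn i).toFinset = S),
      (Γbr r m i) ⊗ₜ[ℂ] (Γbr r m i) = WW r S := by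
    intro i hi
    rw [Finset.mem_filter, Finset.mem_filter] at hi
    obtain ⟨⟨-, hinj⟩, hfib⟩ := hi
    rw [Γbr_of_injective r m i hinj]
    obtain ⟨ε, hε, hP⟩ := P_eq_Gl r (List.ofFn i) (List.nodup_ofFn.mpr hinj)
    rw [hfib] at hP
    exact tmul_sq_eq r ε hε hP
  rw [Finset.sum_congr rfl hterm, Finset.sum_const]
  rw [Finset.filter_filter, fibercard r m S hScard, ← Nat.cast_smul_eq_nsmul ℂ]

lemma P_mul_gen (r : ℕ) : ∀ (l : List (Fin (2*r))), l.Nodup → ∀ a : Fin (2*r),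
    ∃ ε : ℂ, ε^2 = 1 ∧
      P r l * Γgen r a = ε • P r (if a ∈ l then l.erase a else l ++ [a]) := by
  intro l
  induction l with
  | nil =>
    intro _ a
    refine ⟨1, one_pow 2, ?_⟩
    simp [P_singleton, P_cons]
  | cons x l ih =>
    intro hnd a
    have hxl : x ∉ l := (List.nodup_cons.mp hnd).1
    have hlnd : l.Nodup := (List.nodup_cons.mp hnd).2
    by_cases hmem : a ∈ x :: l
    · rw [if_pos hmem]
      rcases eq_or_ne a x with rfl | hax
      · -- a = x, a ∉ l
        have hmove : Γgen r a * P r l = ((-1:ℂ)^l.length) • (P r l * Γgen r a) :=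
          P_move r a l (fun y hy => fun h => hxl (h ▸ hy))
        refine ⟨((-1:ℂ)^l.length), by rw [← pow_mul, mul_comm, pow_mul]; simp, ?_⟩
        rw [List.erase_cons_head, P_cons]
        calc Γgen r a * P r l * Γgen r a
            = ((-1:ℂ)^l.length • (P r l * Γgen r a)) * Γgen r a := by rw [hmove]
          _ = (-1:ℂ)^l.length • (P r l * (Γgen r a * Γgen r a)) := by
              rw [smul_mul_assoc, mul_assoc]
          _ = (-1:ℂ)^l.length • P r l := by rw [gsq, mul_one]
      · have hal : a ∈ l := by
          rcases List.mem_cons.mp hmem with h | h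
          · exact absurd h hax
          · exact h
        obtain ⟨ε, hε, hP⟩ := ih hlnd a
        rw [if_pos hal] at hP
        refine ⟨ε, hε, ?_⟩
        rw [P_cons, mul_assoc, hP, List.erase_cons_tail, P_cons, mul_smul_comm]
        simp [hax.symm]
    · rw [if_neg hmem]
      have hal : a ∉ l := fun h => hmem (List.mem_cons_of_mem _ h)
      obtain ⟨ε, hε, hP⟩ := ih hlnd a
      rw [if_neg hal] at hP
      refine ⟨ε, hε, ?_⟩
      rw [P_cons, mul_assoc, hP, List.cons_append, P_cons, mul_smul_comm]

lemma symmDiff_singleton_mem {α : Type*} [DecidableEq α] {S : Finset α} {a : α}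
    (h : a ∈ S) : symmDiff S {a} = S.erase a := by
  ext x
  simp only [Finset.mem_symmDiff, Finset.mem_singleton, Finset.mem_erase]
  constructor
  · rintro (⟨h1, h2⟩ | ⟨rfl, h2⟩)
    · exact ⟨h2, h1⟩
    · exact absurd h h2
  · rintro ⟨h1, h2⟩
    exact Or.inl ⟨h2, h1⟩

lemma symmDiff_singleton_not_mem {α : Type*} [DecidableEq α] {S : Finset α} {a : α}
    (h : a ∉ S) : symmDiff S {a} = insert a S := by
  ext x
  simp only [Finset.mem_symmDiff, Finset.mem_singleton, Finset.mem_insert]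
  constructor
  · rintro (⟨h1, h2⟩ | ⟨rfl, h2⟩)
    · exact Or.inr h1
    · exact Or.inl rfl
  · rintro (rfl | h1)
    · exact Or.inr ⟨rfl, h⟩
    · exact Or.inl ⟨h1, fun hx => h (hx ▸ h1)⟩

lemma Gl_mul_gen' (r : ℕ) (S : Finset (Fin (2*r))) (a : Fin (2*r)) :
    ∃ ε : ℂ, ε^2 = 1 ∧ Gl r S * Γgen r a = ε • Gl r (symmDiff S {a}) := by
  classical
  set l := S.sort (· ≤ ·) with hldef
  have hlnd : l.Nodup := S.sort_nodup _
  have hltf : l.toFinset = S := S.sort_toFinset _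
  obtain ⟨ε₁, hε₁, hP⟩ := P_mul_gen r l hlnd a
  by_cases hmem : a ∈ S
  · have hal : a ∈ l := by rw [← hltf] at hmem; exact List.mem_toFinset.mp hmem
    rw [if_pos hal] at hP
    have hnd' : (l.erase a).Nodup := hlnd.erase a
    obtain ⟨ε₂, hε₂, hP2⟩ := P_eq_Gl r (l.erase a) hnd'
    have htf : (l.erase a).toFinset = symmDiff S {a} := by
      rw [symmDiff_singleton_mem hmem]
      ext x
      simp only [List.mem_toFinset, Finset.mem_erase]
      rw [hlnd.mem_erase_iff]
      rw [← hltf]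
      simp [List.mem_toFinset]
    rw [htf] at hP2
    exact ⟨ε₁ * ε₂, by rw [mul_pow, hε₁, hε₂, one_mul], by
      rw [Gl, ← hldef, hP, hP2, smul_smul]⟩
  · have hal : a ∉ l := fun h => hmem (hltf ▸ List.mem_toFinset.mpr h)
    rw [if_neg hal] at hP
    have hnd' : (l ++ [a]).Nodup := by
      rw [List.nodup_append]
      exact ⟨hlnd, List.nodup_singleton a, by
        intro x hx
        simp only [List.mem_singleton]
        intro b hb hxb
        exact hal (by rw [← hb, ← hxb]; exact hx)⟩
    obtain ⟨ε₂, hε₂, hP2⟩ := P_eq_Gl r (l ++ [a]) hnd'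
    have htf : (l ++ [a]).toFinset = symmDiff S {a} := by
      rw [symmDiff_singleton_not_mem hmem, List.toFinset_append, hltf]
      rw [Finset.insert_eq, Finset.union_comm]
      simp
    rw [htf] at hP2
    exact ⟨ε₁ * ε₂, by rw [mul_pow, hε₁, hε₂, one_mul], by
      rw [Gl, ← hldef, hP, hP2, smul_smul]⟩

lemma Gl_mul_P (r : ℕ) : ∀ (lt : List (Fin (2*r))) (S : Finset (Fin (2*r))),
    ∃ ε : ℂ, ε^2 = 1 ∧
      Gl r S * P r lt = ε • Gl r (lt.foldl (fun A x => symmDiff A {x}) S) := by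
  intro lt
  induction lt with
  | nil => intro S; exact ⟨1, one_pow 2, by simp⟩
  | cons a lt ih =>
    intro S
    obtain ⟨ε₁, hε₁, h1⟩ := Gl_mul_gen' r S a
    obtain ⟨ε₂, hε₂, h2⟩ := ih (symmDiff S {a})
    refine ⟨ε₁ * ε₂, by rw [mul_pow, hε₁, hε₂, one_mul], ?_⟩
    rw [List.foldl_cons, P_cons, ← mul_assoc, h1, smul_mul_assoc, h2, smul_smul]

lemma foldl_symmDiff {α : Type*} [DecidableEq α] :
    ∀ (l : List α), l.Nodup → ∀ S : Finset α,
      l.foldl (fun A x => symmDiff A {x}) S = symmDiff S l.toFinset := by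
  intro l
  induction l with
  | nil =>
    intro _ S
    rw [List.foldl_nil, List.toFinset_nil, show (∅ : Finset α) = ⊥ from rfl, symmDiff_bot]
  | cons a l ih =>
    intro hnd S
    have hal : a ∉ l := (List.nodup_cons.mp hnd).1
    rw [List.foldl_cons, ih (List.nodup_cons.mp hnd).2, List.toFinset_cons,
      symmDiff_assoc]
    congr 1
    rw [← symmDiff_singleton_not_mem (by simpa using hal)]
    rw [symmDiff_comm]

lemma Gl_mul_Gl (r : ℕ) (S T : Finset (Fin (2*r))) :
    ∃ ε : ℂ, ε^2 = 1 ∧ Gl r S * Gl r T = ε • Gl r (symmDiff S T) := by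
  obtain ⟨ε, hε, h⟩ := Gl_mul_P r (T.sort (· ≤ ·)) S
  rw [foldl_symmDiff _ (T.sort_nodup (· ≤ ·)) S, T.sort_toFinset (· ≤ ·)] at h
  exact ⟨ε, hε, h⟩

lemma WW_mul_WW (r : ℕ) (S T : Finset (Fin (2*r))) :
    WW r S * WW r T = WW r (symmDiff S T) := by
  obtain ⟨ε, hε, h⟩ := Gl_mul_Gl r S T
  rw [WW, WW, Algebra.TensorProduct.tmul_mul_tmul]
  exact tmul_sq_eq r ε hε h

section Counting
variable {α : Type*} [Fintype α] [DecidableEq α]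

lemma S_det0 {S T U : Finset α} (hd : S ∩ T = ∅) (hU : symmDiff S T = U) :
    S = U \ T := by
  subst hU
  ext x
  simp only [Finset.mem_sdiff, Finset.mem_symmDiff]
  constructor
  · intro hx
    have hxT : x ∉ T := fun hT => (Finset.eq_empty_iff_forall_notMem.mp hd x)
      (Finset.mem_inter.mpr ⟨hx, hT⟩)
    exact ⟨Or.inl ⟨hx, hxT⟩, hxT⟩
  · rintro ⟨(⟨h1, _⟩ | ⟨h1, h2⟩), h3⟩
    · exact h1
    · exact absurd h1 h3

lemma card_fiber0 {k : ℕ} (U : Finset α) (hU : U.card = 2*k+2) :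
    ((Finset.powersetCard (2*k) (Finset.univ : Finset α) ×ˢ
        Finset.powersetCard 2 (Finset.univ : Finset α)).filter
      (fun p => (p.1 ∩ p.2).card = 0 ∧ symmDiff p.1 p.2 = U)).card
    = (2*k+2).choose 2 := by
  classical
  rw [← hU, ← Finset.card_powersetCard]
  apply Finset.card_bij (fun p _ => p.2)
  · rintro ⟨S, T⟩ hp
    simp only [Finset.mem_filter, Finset.mem_product, Finset.mem_powersetCard] at hp
    obtain ⟨⟨⟨-, hS⟩, ⟨-, hT⟩⟩, hint, hsd⟩ := hp
    rw [Finset.mem_powersetCard]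
    refine ⟨?_, hT⟩
    intro x hx
    rw [← hsd, Finset.mem_symmDiff]
    right
    refine ⟨hx, fun hxS => ?_⟩
    have := Finset.card_eq_zero.mp hint
    exact Finset.eq_empty_iff_forall_notMem.mp this x (Finset.mem_inter.mpr ⟨hxS, hx⟩)
  · rintro ⟨S, T⟩ hp ⟨S', T'⟩ hp' h
    simp only at h
    simp only [Finset.mem_filter, Finset.mem_product, Finset.mem_powersetCard] at hp hp'
    obtain ⟨-, hint, hsd⟩ := hp
    obtain ⟨-, hint', hsd'⟩ := hp'
    have e1 : S = U \ T := S_det0 (Finset.card_eq_zero.mp hint) hsd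
    have e2 : S' = U \ T' := S_det0 (Finset.card_eq_zero.mp hint') hsd'
    subst h
    rw [Prod.mk.injEq]
    exact ⟨e1.trans e2.symm, rfl⟩
  · intro T hT
    rw [Finset.mem_powersetCard] at hT
    obtain ⟨hTU, hT2⟩ := hT
    refine ⟨(U \ T, T), ?_, rfl⟩
    simp only [Finset.mem_filter, Finset.mem_product, Finset.mem_powersetCard]
    have hdisj : Disjoint (U \ T) T := Finset.sdiff_disjoint
    refine ⟨⟨⟨Finset.subset_univ _, ?_⟩, ⟨Finset.subset_univ _, hT2⟩⟩, ?_, ?_⟩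
    · rw [Finset.card_sdiff_of_subset hTU, hU, hT2]
      omega
    · rw [Finset.card_eq_zero, ← Finset.disjoint_iff_inter_eq_empty]
      exact hdisj
    · rw [hdisj.symmDiff_eq_sup]
      exact Finset.sdiff_union_of_subset hTU

lemma card_fiber2 {k : ℕ} (hk : 1 ≤ k) (U : Finset α) (hU : U.card = 2*k-2) :
    ((Finset.powersetCard (2*k) (Finset.univ : Finset α) ×ˢ
        Finset.powersetCard 2 (Finset.univ : Finset α)).filter
      (fun p => (p.1 ∩ p.2).card = 2 ∧ symmDiff p.1 p.2 = U)).card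
    = (Fintype.card α - (2*k-2)).choose 2 := by
  classical
  have hUc : Uᶜ.card = Fintype.card α - (2*k-2) := by
    rw [Finset.card_compl, hU]
  rw [← hUc, ← Finset.card_powersetCard]
  apply Finset.card_bij (fun p _ => p.2)
  · rintro ⟨S, T⟩ hp
    simp only [Finset.mem_filter, Finset.mem_product, Finset.mem_powersetCard] at hp
    obtain ⟨⟨⟨-, hS⟩, ⟨-, hT⟩⟩, hint, hsd⟩ := hp
    rw [Finset.mem_powersetCard]
    have hTS : T ⊆ S := by
      have h1 : S ∩ T ⊆ T := Finset.inter_subset_right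
      have h2 : S ∩ T = T := Finset.eq_of_subset_of_card_le h1 (by rw [hint, hT])
      rw [← h2]
      exact Finset.inter_subset_left
    refine ⟨?_, hT⟩
    intro x hx
    rw [Finset.mem_compl, ← hsd, Finset.mem_symmDiff]
    push_neg
    exact ⟨fun _ => hx, fun _ => hTS hx⟩
  · rintro ⟨S, T⟩ hp ⟨S', T'⟩ hp' h
    simp only at h
    simp only [Finset.mem_filter, Finset.mem_product, Finset.mem_powersetCard] at hp hp'
    obtain ⟨⟨⟨-, hS⟩, ⟨-, hT⟩⟩, hint, hsd⟩ := hp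
    obtain ⟨⟨⟨-, hS'⟩, ⟨-, hT'⟩⟩, hint', hsd'⟩ := hp'
    have key : ∀ (S₀ T₀ : Finset α), S₀.card = 2*k → T₀.card = 2 →
        (S₀ ∩ T₀).card = 2 → symmDiff S₀ T₀ = U → S₀ = U ∪ T₀ := by
      intro S₀ T₀ hS₀ hT₀ hi₀ hd₀
      have hTS : T₀ ⊆ S₀ := by
        have h1 : S₀ ∩ T₀ ⊆ T₀ := Finset.inter_subset_right
        have h2 : S₀ ∩ T₀ = T₀ := Finset.eq_of_subset_of_card_le h1 (by rw [hi₀, hT₀])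
        rw [← h2]; exact Finset.inter_subset_left
      ext x
      constructor
      · intro hx
        by_cases hxT : x ∈ T₀
        · exact Finset.mem_union_right _ hxT
        · refine Finset.mem_union_left _ ?_
          rw [← hd₀, Finset.mem_symmDiff]
          exact Or.inl ⟨hx, hxT⟩
      · intro hx
        rcases Finset.mem_union.mp hx with hx | hx
        · rw [← hd₀, Finset.mem_symmDiff] at hx
          rcases hx with ⟨h1, -⟩ | ⟨h1, h2⟩
          · exact h1
          · exact absurd (hTS h1) h2
        · exact hTS hx
    subst h
    rw [Prod.mk.injEq]
    refine ⟨?_, rfl⟩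
    rw [key S T hS hT hint hsd, key S' T hS' hT hint' hsd']
  · intro T hT
    rw [Finset.mem_powersetCard] at hT
    obtain ⟨hTU, hT2⟩ := hT
    have hdisj : Disjoint U T := by
      rw [Finset.disjoint_right]
      intro x hx
      exact Finset.mem_compl.mp (hTU hx)
    refine ⟨(U ∪ T, T), ?_, rfl⟩
    simp only [Finset.mem_filter, Finset.mem_product, Finset.mem_powersetCard]
    have hint : (U ∪ T) ∩ T = T := Finset.inter_eq_right.mpr Finset.subset_union_right
    refine ⟨⟨⟨Finset.subset_univ _, ?_⟩, ⟨Finset.subset_univ _, hT2⟩⟩, ?_, ?_⟩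
    · rw [Finset.card_union_of_disjoint hdisj, hU, hT2]
      omega
    · rw [hint, hT2]
    · ext x
      rw [Finset.mem_symmDiff]
      constructor
      · rintro (⟨h1, h2⟩ | ⟨h1, h2⟩)
        · rcases Finset.mem_union.mp h1 with h | h
          · exact h
          · exact absurd h h2
        · exact absurd (Finset.mem_union_right _ h1) h2
      · intro hx
        exact Or.inl ⟨Finset.mem_union_left _ hx, fun hxT => (Finset.disjoint_left.mp hdisj hx) hxT⟩

lemma card_fiber1 {k : ℕ} (U : Finset α) (hU : U.card = 2*k) :
    ((Finset.powersetCard (2*k) (Finset.univ : Finset α) ×ˢ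
        Finset.powersetCard 2 (Finset.univ : Finset α)).filter
      (fun p => (p.1 ∩ p.2).card = 1 ∧ symmDiff p.1 p.2 = U)).card
    = 2*k * (Fintype.card α - 2*k) := by
  classical
  have key : (U ×ˢ Uᶜ).card
      = ((Finset.powersetCard (2*k) (Finset.univ : Finset α) ×ˢ
        Finset.powersetCard 2 (Finset.univ : Finset α)).filter
      (fun p => (p.1 ∩ p.2).card = 1 ∧ symmDiff p.1 p.2 = U)).card := by
    apply Finset.card_bij
      (fun p _ => ((insert p.2 (U.erase p.1), ({p.2, p.1} : Finset α)) :
        Finset α × Finset α))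
    · rintro ⟨d, c⟩ hp
      rw [Finset.mem_product] at hp
      obtain ⟨hd, hc⟩ := hp
      rw [Finset.mem_compl] at hc
      have hcd : c ≠ d := fun h => hc (h ▸ hd)
      have hcU : c ∉ U.erase d := fun h => hc (Finset.mem_of_mem_erase h)
      simp only [Finset.mem_filter, Finset.mem_product, Finset.mem_powersetCard]
      refine ⟨⟨⟨Finset.subset_univ _, ?_⟩, ⟨Finset.subset_univ _, ?_⟩⟩, ?_, ?_⟩
      · rw [Finset.card_insert_of_notMem hcU, Finset.card_erase_of_mem hd, hU]
        have : 0 < U.card := Finset.card_pos.mpr ⟨d, hd⟩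
        omega
      · rw [Finset.card_insert_of_notMem (by simpa using hcd), Finset.card_singleton]
      · have : insert c (U.erase d) ∩ {c, d} = {c} := by
          ext x
          simp only [Finset.mem_inter, Finset.mem_insert, Finset.mem_erase,
            Finset.mem_singleton]
          constructor
          · rintro ⟨h1, (rfl | rfl)⟩
            · rfl
            · rcases h1 with h | ⟨h2, -⟩
              · exact absurd h.symm hcd
              · exact absurd rfl h2
          · rintro rfl
            exact ⟨Or.inl rfl, Or.inl rfl⟩
        rw [this, Finset.card_singleton]
      · ext x
        simp only [Finset.mem_symmDiff, Finset.mem_insert, Finset.mem_erase,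
          Finset.mem_singleton]
        by_cases hxc : x = c
        · subst hxc
          simp [hc, hcd]
        · by_cases hxd : x = d
          · subst hxd
            simp [hd, hcd, Ne.symm hcd, hxc]
          · simp [hxc, hxd]
    · rintro ⟨d, c⟩ hp ⟨d', c'⟩ hp' h
      rw [Finset.mem_product] at hp hp'
      obtain ⟨hd, hc⟩ := hp
      obtain ⟨hd', hc'⟩ := hp'
      rw [Finset.mem_compl] at hc hc'
      rw [Prod.mk.injEq] at h
      obtain ⟨-, hT⟩ := h
      have hd'mem : d' ∈ ({c, d} : Finset α) := by rw [hT]; simp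
      have hc'mem : c' ∈ ({c, d} : Finset α) := by rw [hT]; simp
      have hdd : d' = d := by
        rcases Finset.mem_insert.mp hd'mem with h | h
        · rw [h] at hd'
          exact absurd hd' hc
        · exact Finset.mem_singleton.mp h
      have hcc : c' = c := by
        rcases Finset.mem_insert.mp hc'mem with h | h
        · exact h
        · rw [Finset.mem_singleton] at h
          rw [h] at hc'
          exact absurd hd hc'
      rw [Prod.mk.injEq]
      exact ⟨hdd.symm, hcc.symm⟩
    · rintro ⟨S, T⟩ hp
      simp only [Finset.mem_filter, Finset.mem_product, Finset.mem_powersetCard] at hp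
      obtain ⟨⟨⟨-, hS⟩, ⟨-, hT⟩⟩, hint, hsd⟩ := hp
      obtain ⟨c, hc⟩ := Finset.card_eq_one.mp hint
      have hcST : c ∈ S ∩ T := by rw [hc]; exact Finset.mem_singleton_self c
      have hcS : c ∈ S := (Finset.mem_inter.mp hcST).1
      have hcT : c ∈ T := (Finset.mem_inter.mp hcST).2
      have hTS1 : (T \ S).card = 1 := by
        have h1 := Finset.card_sdiff_add_card_inter T S
        rw [Finset.inter_comm, hint, hT] at h1
        omega
      obtain ⟨d, hdeq⟩ := Finset.card_eq_one.mp hTS1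
      have hdTS : d ∈ T \ S := by rw [hdeq]; exact Finset.mem_singleton_self d
      have hdT : d ∈ T := (Finset.mem_sdiff.mp hdTS).1
      have hdS : d ∉ S := (Finset.mem_sdiff.mp hdTS).2
      have hcU : c ∉ U := by
        rw [← hsd, Finset.mem_symmDiff]
        push_neg
        exact ⟨fun _ => hcT, fun _ => hcS⟩
      have hdU : d ∈ U := by
        rw [← hsd, Finset.mem_symmDiff]
        exact Or.inr ⟨hdT, hdS⟩
      refine ⟨(d, c), Finset.mem_product.mpr ⟨hdU, Finset.mem_compl.mpr hcU⟩, ?_⟩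
      have hTeq : ({c, d} : Finset α) = T := by
        have h1 : T \ S ∪ T ∩ S = T := Finset.sdiff_union_inter T S
        rw [Finset.inter_comm, hc, hdeq] at h1
        rw [← h1]
        ext x
        simp only [Finset.mem_insert, Finset.mem_singleton, Finset.mem_union]
        tauto
      have hSeq : insert c (U.erase d) = S := by
        ext x
        constructor
        · intro hx
          rcases Finset.mem_insert.mp hx with rfl | hx
          · exact hcS
          · obtain ⟨hxd, hxU⟩ := Finset.mem_erase.mp hx
            rw [← hsd, Finset.mem_symmDiff] at hxU
            rcases hxU with ⟨h1, -⟩ | ⟨h1, h2⟩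
            · exact h1
            · rw [← hTeq] at h1
              rcases Finset.mem_insert.mp h1 with rfl | h1
              · exact hcS
              · exact absurd (Finset.mem_singleton.mp h1) hxd
        · intro hx
          by_cases hxT : x ∈ T
          · rw [← hTeq] at hxT
            rcases Finset.mem_insert.mp hxT with rfl | hxT
            · exact Finset.mem_insert_self _ _
            · exact absurd ((Finset.mem_singleton.mp hxT) ▸ hx) hdS
          · refine Finset.mem_insert_of_mem (Finset.mem_erase.mpr ⟨?_, ?_⟩)
            · rintro rfl
              exact hdS hx
            · rw [← hsd, Finset.mem_symmDiff]
              exact Or.inl ⟨hx, hxT⟩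
      rw [Prod.mk.injEq]
      exact ⟨hSeq, hTeq⟩
  rw [← key, Finset.card_product, Finset.card_compl, hU]

end Counting

lemma card_symmDiff_add {α : Type*} [DecidableEq α] (S T : Finset α) :
    (symmDiff S T).card + 2*(S ∩ T).card = S.card + T.card := by
  classical
  have h1 : symmDiff S T = (S \ T) ∪ (T \ S) := by
    ext x
    simp only [Finset.mem_symmDiff, Finset.mem_union, Finset.mem_sdiff]
  have hd : Disjoint (S \ T) (T \ S) := disjoint_sdiff_sdiff
  rw [h1, Finset.card_union_of_disjoint hd]
  have h2 := Finset.card_sdiff_add_card_inter S T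
  have h3 := Finset.card_sdiff_add_card_inter T S
  rw [Finset.inter_comm T S] at h3
  omega

lemma sum_part (r a t M N : ℕ)
    (hM : ∀ S T : Finset (Fin (2*r)), S.card = a → T.card = 2 →
       (S ∩ T).card = t → (symmDiff S T).card = M)
    (hN : ∀ U : Finset (Fin (2*r)), U.card = M →
      ((Finset.powersetCard a (Finset.univ : Finset (Fin (2*r))) ×ˢ
        Finset.powersetCard 2 (Finset.univ : Finset (Fin (2*r)))).filter
        (fun p => (p.1 ∩ p.2).card = t ∧ symmDiff p.1 p.2 = U)).card = N) :
    ∑ p ∈ (Finset.powersetCard a (Finset.univ : Finset (Fin (2*r))) ×ˢ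
        Finset.powersetCard 2 (Finset.univ : Finset (Fin (2*r)))).filter
        (fun p => (p.1 ∩ p.2).card = t),
      WW r (symmDiff p.1 p.2)
    = N • ∑ U ∈ Finset.powersetCard M (Finset.univ : Finset (Fin (2*r))), WW r U := by
  classical
  have hmaps : ∀ p ∈ (Finset.powersetCard a (Finset.univ : Finset (Fin (2*r))) ×ˢ
        Finset.powersetCard 2 (Finset.univ : Finset (Fin (2*r)))).filter
        (fun p => (p.1 ∩ p.2).card = t),
      symmDiff p.1 p.2 ∈ Finset.powersetCard M (Finset.univ : Finset (Fin (2*r))) := by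
    rintro ⟨S, T⟩ hp
    rw [Finset.mem_filter, Finset.mem_product, Finset.mem_powersetCard,
      Finset.mem_powersetCard] at hp
    obtain ⟨⟨⟨-, hS⟩, ⟨-, hT⟩⟩, hint⟩ := hp
    rw [Finset.mem_powersetCard]
    exact ⟨Finset.subset_univ _, hM S T hS hT hint⟩
  rw [← Finset.sum_fiberwise_of_maps_to hmaps, Finset.smul_sum]
  refine Finset.sum_congr rfl fun U hU => ?_
  have hUcard := (Finset.mem_powersetCard.mp hU).2
  have hconst : ∀ p ∈ ((Finset.powersetCard a (Finset.univ : Finset (Fin (2*r))) ×ˢ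
        Finset.powersetCard 2 (Finset.univ : Finset (Fin (2*r)))).filter
        (fun p => (p.1 ∩ p.2).card = t)).filter (fun p => symmDiff p.1 p.2 = U),
      WW r (symmDiff p.1 p.2) = WW r U := by
    intro p hp
    rw [(Finset.mem_filter.mp hp).2]
  rw [Finset.sum_congr rfl hconst, Finset.sum_const, Finset.filter_filter, hN U hUcard]

theorem Ik_recurrence' (r : ℕ) (hr : 2 ≤ r) (k : ℕ) (hk : 1 ≤ k) :
    Ik r (2*k) * Ik r 2
      = Ik r (2*k+2)
        + ((8:ℂ)*(k:ℂ)*((r:ℂ)-(k:ℂ))) • Ik r (2*k)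
        + ((4:ℂ)*(k:ℂ)*(2*(k:ℂ)-1)*((r:ℂ)+1-(k:ℂ))*(2*(r:ℂ)+1-2*(k:ℂ))) • Ik r (2*k-2) := by
  classical
  rw [IkA r (2*k), IkA r 2, IkA r (2*k+2), IkA r (2*k-2)]
  rw [smul_mul_smul_comm]
  -- expand the product of sums
  have hexp : (∑ S ∈ Finset.powersetCard (2*k) (Finset.univ : Finset (Fin (2*r))), WW r S) *
      (∑ T ∈ Finset.powersetCard 2 (Finset.univ : Finset (Fin (2*r))), WW r T)
      = ∑ p ∈ Finset.powersetCard (2*k) (Finset.univ : Finset (Fin (2*r))) ×ˢ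
          Finset.powersetCard 2 (Finset.univ : Finset (Fin (2*r))),
          WW r (symmDiff p.1 p.2) := by
    rw [Finset.sum_mul_sum]
    calc (∑ S ∈ Finset.powersetCard (2*k) (Finset.univ : Finset (Fin (2*r))),
          ∑ T ∈ Finset.powersetCard 2 (Finset.univ : Finset (Fin (2*r))), WW r S * WW r T)
        = ∑ S ∈ Finset.powersetCard (2*k) (Finset.univ : Finset (Fin (2*r))),
          ∑ T ∈ Finset.powersetCard 2 (Finset.univ : Finset (Fin (2*r))),
            WW r (symmDiff S T) :=
          Finset.sum_congr rfl fun S _ => Finset.sum_congr rfl fun T _ => WW_mul_WW r S T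
      _ = _ := (Finset.sum_product' _ _ _).symm
  rw [hexp]
  -- split according to the intersection size
  have hsplit : (∑ p ∈ Finset.powersetCard (2*k) (Finset.univ : Finset (Fin (2*r))) ×ˢ
          Finset.powersetCard 2 (Finset.univ : Finset (Fin (2*r))),
          WW r (symmDiff p.1 p.2))
      = (∑ p ∈ (Finset.powersetCard (2*k) (Finset.univ : Finset (Fin (2*r))) ×ˢ
          Finset.powersetCard 2 (Finset.univ : Finset (Fin (2*r)))).filter
            (fun p => (p.1 ∩ p.2).card = 0), WW r (symmDiff p.1 p.2))
      + ((∑ p ∈ (Finset.powersetCard (2*k) (Finset.univ : Finset (Fin (2*r))) ×ˢ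
          Finset.powersetCard 2 (Finset.univ : Finset (Fin (2*r)))).filter
            (fun p => (p.1 ∩ p.2).card = 1), WW r (symmDiff p.1 p.2))
      + (∑ p ∈ (Finset.powersetCard (2*k) (Finset.univ : Finset (Fin (2*r))) ×ˢ
          Finset.powersetCard 2 (Finset.univ : Finset (Fin (2*r)))).filter
            (fun p => (p.1 ∩ p.2).card = 2), WW r (symmDiff p.1 p.2))) := by
    rw [← Finset.sum_filter_add_sum_filter_not (Finset.powersetCard (2*k)
      (Finset.univ : Finset (Fin (2*r))) ×ˢ Finset.powersetCard 2
      (Finset.univ : Finset (Fin (2*r)))) (fun p => (p.1 ∩ p.2).card = 0)]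
    congr 1
    rw [← Finset.sum_filter_add_sum_filter_not _ (fun p => (p.1 ∩ p.2).card = 1),
      Finset.filter_filter, Finset.filter_filter]
    congr 1
    · apply Finset.sum_congr _ (fun _ _ => rfl)
      apply Finset.filter_congr
      intro p hp
      constructor
      · rintro ⟨-, h⟩; exact h
      · intro h; exact ⟨by omega, h⟩
    · apply Finset.sum_congr _ (fun _ _ => rfl)
      apply Finset.filter_congr
      intro p hp
      have hb : (p.1 ∩ p.2).card ≤ 2 := by
        have h1 : p.1 ∩ p.2 ⊆ p.2 := Finset.inter_subset_right
        have h2 := Finset.card_le_card h1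
        have h3 : p.2.card = 2 :=
          (Finset.mem_powersetCard.mp (Finset.mem_product.mp hp).2).2
        omega
      constructor
      · rintro ⟨h1, h2⟩; omega
      · intro h; omega
  rw [hsplit]
  -- the three fiberwise sums
  have hpart0 := sum_part r (2*k) 0 (2*k+2) ((2*k+2).choose 2)
    (fun S T hS hT hi => by have := card_symmDiff_add S T; omega)
    (fun U hU => card_fiber0 U hU)
  have hpart1 := sum_part r (2*k) 1 (2*k) (2*k * (2*r - 2*k))
    (fun S T hS hT hi => by have := card_symmDiff_add S T; omega)
    (fun U hU => by
      have := card_fiber1 U hU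
      rwa [Fintype.card_fin] at this)
  have hpart2 := sum_part r (2*k) 2 (2*k-2) ((2*r - (2*k-2)).choose 2)
    (fun S T hS hT hi => by have := card_symmDiff_add S T; omega)
    (fun U hU => by
      have := card_fiber2 hk U hU
      rwa [Fintype.card_fin] at this)
  rw [hpart0, hpart1, hpart2]
  rw [smul_add, smul_add]
  have h2fac : ((Nat.factorial 2 : ℕ) : ℂ) = 2 := by norm_num [Nat.factorial]
  have e0 : (((2*k).factorial : ℂ) * ((Nat.factorial 2 : ℕ) : ℂ)) •
      ((2*k+2).choose 2 • ∑ U ∈ Finset.powersetCard (2*k+2)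
        (Finset.univ : Finset (Fin (2*r))), WW r U)
      = ((2*k+2).factorial : ℂ) • ∑ U ∈ Finset.powersetCard (2*k+2)
        (Finset.univ : Finset (Fin (2*r))), WW r U := by
    rw [← Nat.cast_smul_eq_nsmul ℂ ((2*k+2).choose 2), smul_smul]
    congr 1
    have hfac : ((2*k+2).factorial : ℂ) = (2*(k:ℂ)+2) * ((2*(k:ℂ)+1) * ((2*k).factorial : ℂ)) := by
      rw [show 2*k+2 = (2*k+1)+1 from rfl, Nat.factorial_succ,
        show 2*k+1 = (2*k)+1 from rfl, Nat.factorial_succ]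
      push_cast
      ring
    rw [h2fac, Nat.cast_choose_two, hfac]
    push_cast
    field_simp
    ring
  have e1 : (((2*k).factorial : ℂ) * ((Nat.factorial 2 : ℕ) : ℂ)) •
      ((2*k * (2*r - 2*k)) • ∑ U ∈ Finset.powersetCard (2*k)
        (Finset.univ : Finset (Fin (2*r))), WW r U)
      = ((8:ℂ)*(k:ℂ)*((r:ℂ)-(k:ℂ))) • ((2*k).factorial : ℂ) •
        ∑ U ∈ Finset.powersetCard (2*k) (Finset.univ : Finset (Fin (2*r))), WW r U := by
    by_cases hkr : k ≤ r
    · rw [← Nat.cast_smul_eq_nsmul ℂ, smul_smul, smul_smul]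
      congr 1
      have hsub : ((2*r - 2*k : ℕ) : ℂ) = 2*(r:ℂ) - 2*(k:ℂ) := by
        rw [Nat.cast_sub (by omega : 2*k ≤ 2*r)]
        push_cast
        ring
      rw [h2fac, Nat.cast_mul, hsub]
      push_cast
      ring
    · have hz : Finset.powersetCard (2*k) (Finset.univ : Finset (Fin (2*r))) = ∅ := by
        rw [Finset.powersetCard_eq_empty, Finset.card_univ, Fintype.card_fin]
        omega
      rw [hz, Finset.sum_empty, smul_zero, smul_zero, smul_zero, smul_zero]
  have e2 : (((2*k).factorial : ℂ) * ((Nat.factorial 2 : ℕ) : ℂ)) •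
      (((2*r - (2*k-2)).choose 2) • ∑ U ∈ Finset.powersetCard (2*k-2)
        (Finset.univ : Finset (Fin (2*r))), WW r U)
      = ((4:ℂ)*(k:ℂ)*(2*(k:ℂ)-1)*((r:ℂ)+1-(k:ℂ))*(2*(r:ℂ)+1-2*(k:ℂ))) •
        ((2*k-2).factorial : ℂ) •
        ∑ U ∈ Finset.powersetCard (2*k-2) (Finset.univ : Finset (Fin (2*r))), WW r U := by
    by_cases hkr : k ≤ r + 1
    · rw [← Nat.cast_smul_eq_nsmul ℂ, smul_smul, smul_smul]
      congr 1
      have hcast : ((2*k-2 : ℕ) : ℂ) = 2*(k:ℂ) - 2 := by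
        rw [Nat.cast_sub (show 2 ≤ 2*k by omega)]
        push_cast
        ring
      have hc : (((2*r - (2*k-2)).choose 2 : ℕ) : ℂ)
          = (2*(r:ℂ) - (2*(k:ℂ)-2)) * ((2*(r:ℂ) - (2*(k:ℂ)-2)) - 1) / 2 := by
        rw [Nat.cast_choose_two, Nat.cast_sub (show 2*k-2 ≤ 2*r by omega), hcast]
        push_cast
        ring
      have hfac : ((2*k).factorial : ℂ)
          = (2*(k:ℂ)) * (2*(k:ℂ)-1) * (((2*k-2).factorial : ℕ) : ℂ) := by
        have key : ∀ a : ℕ, ((a+2).factorial : ℂ)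
            = ((a:ℂ)+2)*((a:ℂ)+1)*((a.factorial : ℕ) : ℂ) := by
          intro a
          rw [show a+2 = (a+1)+1 from rfl, Nat.factorial_succ, Nat.factorial_succ]
          push_cast
          ring
        have estep : ((2*k).factorial : ℂ) = (((2*k-2)+2).factorial : ℂ) := by
          norm_cast
          congr 1
          omega
        rw [estep, key (2*k-2), hcast]
        ring
      rw [h2fac, hc, hfac]
      field_simp
      ring
    · have hz : Finset.powersetCard (2*k-2) (Finset.univ : Finset (Fin (2*r))) = ∅ := by
        rw [Finset.powersetCard_eq_empty, Finset.card_univ, Fintype.card_fin]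
        omega
      rw [hz, Finset.sum_empty, smul_zero, smul_zero, smul_zero, smul_zero]
  rw [e0, e1, e2]
  exact (add_assoc _ _ _).symm

end IkProof

/-- the recurrence
`I_{2k}·I₂ = I_{2k+2} + 8k(r−k)·I_{2k} + 4k(2k−1)(r+1−k)(2r+1−2k)·I_{2k−2}`. -/
theorem Ik_recurrence (r : ℕ) (hr : 2 ≤ r) (k : ℕ) (hk : 1 ≤ k) :
    Ik r (2*k) * Ik r 2
      = Ik r (2*k+2)
        + ((8:ℂ)*(k:ℂ)*((r:ℂ)-(k:ℂ))) • Ik r (2*k)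
        + ((4:ℂ)*(k:ℂ)*(2*(k:ℂ)-1)*((r:ℂ)+1-(k:ℂ))*(2*(r:ℂ)+1-2*(k:ℂ))) • Ik r (2*k-2) := by
  exact IkProof.Ik_recurrence' r hr k hk

end
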